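/- arXiv:math/0407077 — 3 statements merged into one kernel-verified Lean document; each statement's English description precedes it below -/
import Mathlib

section
/- Let P be a finite p-group and R = F_p. Any monomorphism between two indecomposable projective coefficient systems R[P/U^?] → R[P/V^?] is an isomorphism; in particular U and V are conjugate in P. -/
open CategoryTheory

universe u

variable (R : Type) [CommRing R] (G : Type) [Group G]

/-- The category of `G`-sets. -/
abbrev GSet := Action (Type) (MonCat.of G)

/-- The orbit `G/H` as a `G`-set. -/
def orbitGSet (H : Subgroup G) : GSet G := Action.ofMulAction G (G ⧸ H)

/-- A `G`-set is an orbit if it is isomorphic to some `G/H`. -/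
def IsOrbit (X : GSet G) : Prop := ∃ H : Subgroup G, Nonempty (X ≅ orbitGSet G H)

/-- The orbit category of `G`. -/
def OrbitCat := ObjectProperty.FullSubcategory (IsOrbit G)

instance : Category (OrbitCat G) := ObjectProperty.FullSubcategory.category _

/-- Coefficient systems for `G` over `R`: contravariant functors from the orbit
category of `G` to `R`-modules. -/
abbrev CoeffSystem := (OrbitCat G)ᵒᵖ ⥤ ModuleCat R

/-- The orbit `G/H` as an object of the orbit category. -/
def orbitObj (H : Subgroup G) : OrbitCat G := ⟨orbitGSet G H, H, ⟨Iso.refl _⟩⟩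

/-- Forget an orbit-category morphism to a morphism of `G`-sets. -/
def toGHom {O O' : OrbitCat G} (u : O ⟶ O') : O.obj ⟶ O'.obj := u.hom

variable {G} in
@[simp] lemma toGHom_id (O : OrbitCat G) : toGHom G (𝟙 O) = 𝟙 O.obj := rfl

variable {G} in
@[simp] lemma toGHom_comp {O O' O'' : OrbitCat G} (u : O ⟶ O') (v : O' ⟶ O'') :
    toGHom G (u ≫ v) = toGHom G u ≫ toGHom G v := rfl

/-- The coefficient system `R[X^?]`: its value on an orbit `O` is the free `R`-module
on the set of `G`-maps `O ⟶ X`, which for `O = G/K` is the fixed point set `X^K`. -/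
noncomputable def freeSystem (X : GSet G) : CoeffSystem R G where
  obj O := ModuleCat.of R ((O.unop.obj ⟶ X) →₀ R)
  map {O O'} f := ModuleCat.ofHom (Finsupp.lmapDomain R R (fun φ => toGHom G f.unop ≫ φ))
  map_id O := by
    have h : (fun φ : O.unop.obj ⟶ X => toGHom G (𝟙 O.unop) ≫ φ) = _root_.id := by
      funext φ
      simp
    show ModuleCat.ofHom (Finsupp.lmapDomain R R _) = _
    simp only [unop_id]
    rw [h, Finsupp.lmapDomain_id]
    rfl
  map_comp {O O' O''} f g := by
    have h : (fun φ : O.unop.obj ⟶ X => toGHom G (g.unop ≫ f.unop) ≫ φ)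
        = (fun φ : O'.unop.obj ⟶ X => toGHom G g.unop ≫ φ) ∘
          (fun φ : O.unop.obj ⟶ X => toGHom G f.unop ≫ φ) := by
      funext φ
      simp
    show ModuleCat.ofHom (Finsupp.lmapDomain R R _) = _
    simp only [unop_comp]
    rw [h, Finsupp.lmapDomain_comp]
    rfl

/-- The representable coefficient system `R[G/H^?]`. -/
noncomputable def orbitSystem (H : Subgroup G) : CoeffSystem R G :=
  freeSystem R G (orbitGSet G H)

/-- Evaluation of a coefficient system at a subgroup `H`, i.e. at the orbit `G/H`. -/
def evalAt (L : CoeffSystem R G) (H : Subgroup G) : ModuleCat R :=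
  L.obj (Opposite.op (orbitObj G H))

section Helpers

open Function

variable {G : Type} [Group G]

/-- Evaluate a `G`-map out of an orbit at the basepoint. -/
def evPt {H : Subgroup G} {X : GSet G} (φ : orbitGSet G H ⟶ X) : X.V :=
  φ.hom (QuotientGroup.mk 1)

lemma hom_apply_mk {H : Subgroup G} {X : GSet G} (φ : orbitGSet G H ⟶ X) (g : G) :
    φ.hom (QuotientGroup.mk g) = X.ρ g (evPt φ) := by
  have h := ConcreteCategory.congr_hom (φ.comm g) (QuotientGroup.mk (1 : G))
  erw [ConcreteCategory.comp_apply, ConcreteCategory.comp_apply] at h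
  have : (orbitGSet G H).ρ g (QuotientGroup.mk (1 : G)) = QuotientGroup.mk g := by
    show g • (QuotientGroup.mk (1 : G) : G ⧸ H) = _
    simp
  erw [this] at h
  exact h

lemma evPt_injective {H : Subgroup G} {X : GSet G} :
    Injective (fun φ : orbitGSet G H ⟶ X => evPt φ) := by
  intro φ ψ h
  apply Action.hom_ext
  apply ConcreteCategory.hom_ext; intro x
  obtain ⟨g, rfl⟩ := QuotientGroup.mk_surjective x
  erw [hom_apply_mk, hom_apply_mk]
  simp only at h
  rw [h]

end Helpers

section Helpers2

open Function

variable {G : Type} [Group G]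

/-- The `G`-map out of the free orbit determined by a point. -/
def botHom (X : GSet G) (x : X.V) : orbitGSet G ⊥ ⟶ X where
  hom := TypeCat.ofHom fun q => Quotient.liftOn' q (fun g => X.ρ g x) (by
    intro a b h
    rw [QuotientGroup.leftRel_apply] at h
    have : a = b := by
      have := Subgroup.mem_bot.mp h
      group at this ⊢
      rw [← mul_one a, ← this]
      group
    rw [this])
  comm := fun (g : G) => by
    apply ConcreteCategory.hom_ext; intro q
    obtain ⟨a, rfl⟩ := QuotientGroup.mk_surjective q
    erw [ConcreteCategory.comp_apply, ConcreteCategory.comp_apply]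
    have h1 : (orbitGSet G ⊥).ρ g (QuotientGroup.mk a) = QuotientGroup.mk (g * a) := by
      show g • (QuotientGroup.mk a : G ⧸ (⊥ : Subgroup G)) = _
      simp
    erw [h1]
    show X.ρ (g * a) x = X.ρ g (X.ρ a x)
    rw [map_mul]
    rfl

lemma evPt_botHom (X : GSet G) (x : X.V) : evPt (botHom X x) = X.ρ 1 x := rfl

/-- Maps out of the free orbit are classified by points. -/
noncomputable def botEquiv (X : GSet G) : (orbitGSet G ⊥ ⟶ X) ≃ X.V :=
  Equiv.ofBijective (fun φ => evPt φ) ⟨evPt_injective, fun x => ⟨botHom X x, by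
    show evPt (botHom X x) = x
    rw [evPt_botHom, map_one]; rfl⟩⟩

end Helpers2

section Helpers3

open Function

variable {G : Type} [Group G]

/-- Right translation equivalence of quotients by conjugate subgroups. -/
def conjQuotEquiv (U V : Subgroup G) (c : G)
    (hc : Subgroup.map (MulAut.conj c).toMonoidHom U = V) : (G ⧸ U) ≃ (G ⧸ V) where
  toFun := Quotient.map' (fun x => x * c⁻¹) (by
    intro a b h
    rw [QuotientGroup.leftRel_apply] at h ⊢
    have h2 : (MulAut.conj c).toMonoidHom (a⁻¹ * b) ∈ V := hc ▸ Subgroup.mem_map_of_mem _ h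
    have h3 : (a * c⁻¹)⁻¹ * (b * c⁻¹) = (MulAut.conj c).toMonoidHom (a⁻¹ * b) := by
      simp [MulAut.conj_apply]
      group
    rwa [h3])
  invFun := Quotient.map' (fun x => x * c) (by
    intro a b h
    rw [QuotientGroup.leftRel_apply] at h ⊢
    rw [← hc] at h
    obtain ⟨u, hu, hueq⟩ := h
    have h3 : (a * c)⁻¹ * (b * c) = u := by
      have : c⁻¹ * ((MulAut.conj c).toMonoidHom u) * c = u := by
        simp [MulAut.conj_apply]; group
      rw [← this, hueq]; group
    rwa [h3])
  left_inv := by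
    intro q
    obtain ⟨a, rfl⟩ := QuotientGroup.mk_surjective q
    show Quotient.map' _ _ (Quotient.map' _ _ _) = _
    simp [Quotient.map'_mk'', mul_assoc]
  right_inv := by
    intro q
    obtain ⟨a, rfl⟩ := QuotientGroup.mk_surjective q
    show Quotient.map' _ _ (Quotient.map' _ _ _) = _
    simp [Quotient.map'_mk'', mul_assoc]

end Helpers3

section Helpers4

open Function

variable {G : Type} [Group G]

lemma conjQuotEquiv_mk (U V : Subgroup G) (c : G)
    (hc : Subgroup.map (MulAut.conj c).toMonoidHom U = V) (a : G) :
    conjQuotEquiv U V c hc (QuotientGroup.mk a) = QuotientGroup.mk (a * c⁻¹) := rfl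

/-- Orbits at conjugate subgroups are isomorphic `G`-sets. -/
noncomputable def orbitIsoOfConj (U V : Subgroup G) (c : G)
    (hc : Subgroup.map (MulAut.conj c).toMonoidHom U = V) :
    orbitGSet G U ≅ orbitGSet G V :=
  Action.mkIso (conjQuotEquiv U V c hc).toIso (fun (g : G) => by
    apply ConcreteCategory.hom_ext; intro q
    obtain ⟨a, rfl⟩ := QuotientGroup.mk_surjective q
    simp only [ConcreteCategory.comp_apply]
    show (conjQuotEquiv U V c hc) (g • (QuotientGroup.mk a : G ⧸ U)) =
      g • ((conjQuotEquiv U V c hc) (QuotientGroup.mk a))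
    rw [MulAction.Quotient.smul_mk, conjQuotEquiv_mk, conjQuotEquiv_mk,
      MulAction.Quotient.smul_mk, smul_eq_mul, smul_eq_mul, mul_assoc])

end Helpers4

section Helpers5

open Function

lemma finsupp_card_le {K : Type} [Field K] {A B : Type} [Finite A] [Finite B]
    (f : (A →₀ K) →ₗ[K] (B →₀ K)) (hf : Injective f) : Nat.card A ≤ Nat.card B := by
  cases nonempty_fintype A
  cases nonempty_fintype B
  haveI : Module.Finite K (B →₀ K) :=
    Module.Finite.equiv (Finsupp.linearEquivFunOnFinite K K B).symm
  have h := LinearMap.finrank_le_finrank_of_injective hf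
  rwa [Module.finrank_finsupp_self, Module.finrank_finsupp_self,
    ← Nat.card_eq_fintype_card, ← Nat.card_eq_fintype_card] at h

lemma finsupp_bijective {K : Type} [Field K] {A B : Type} [Finite A] [Finite B]
    (f : (A →₀ K) →ₗ[K] (B →₀ K)) (hf : Injective f) (h : Nat.card A = Nat.card B) :
    Bijective f := by
  cases nonempty_fintype A
  cases nonempty_fintype B
  haveI : Module.Finite K (A →₀ K) :=
    Module.Finite.equiv (Finsupp.linearEquivFunOnFinite K K A).symm
  haveI : Module.Finite K (B →₀ K) :=
    Module.Finite.equiv (Finsupp.linearEquivFunOnFinite K K B).symm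
  refine ⟨hf, (LinearMap.injective_iff_surjective_of_finrank_eq_finrank ?_).mp hf⟩
  rw [Module.finrank_finsupp_self, Module.finrank_finsupp_self]
  simpa [Nat.card_eq_fintype_card] using h

end Helpers5

/-- over `F_p` and a finite `p`-group `P`, any monomorphism
`R[P/U^?] → R[P/V^?]` between indecomposable projective coefficient systems is an
isomorphism, and then `U` and `V` are conjugate. -/
theorem mono_orbitSystem_isIso (p : ℕ) [Fact p.Prime] (P : Type) [Group P] [Fintype P]
    (hP : IsPGroup p P) (U V : Subgroup P)
    (f : orbitSystem (ZMod p) P U ⟶ orbitSystem (ZMod p) P V) (hf : Mono f) :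
    IsIso f ∧ ∃ g : P, Subgroup.map (MulAut.conj g).toMonoidHom U = V := by
  classical
  have hmono := (NatTrans.mono_iff_mono_app f).mp hf
  have hinj : ∀ O : (OrbitCat P)ᵒᵖ, Function.Injective (f.app O) :=
    fun O => (ModuleCat.mono_iff_injective (f.app O)).mp (hmono O)
  have hfin : ∀ (Q : OrbitCat P) (W : Subgroup P), Finite (Q.obj ⟶ orbitGSet P W) := by
    rintro ⟨X, H, ⟨i⟩⟩ W
    haveI : Finite ((orbitGSet P W).V) := inferInstanceAs (Finite (P ⧸ W))
    haveI : Finite (orbitGSet P H ⟶ orbitGSet P W) :=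
      Finite.of_injective _ (evPt_injective (H := H) (X := orbitGSet P W))
    exact Finite.of_equiv _ (i.homCongr (Iso.refl (orbitGSet P W))).symm
  -- Step 1: a G-map P/U → P/V exists
  have hne : Nonempty ((orbitObj P U).obj ⟶ orbitGSet P V) := by
    by_contra hcon
    haveI : IsEmpty ((orbitObj P U).obj ⟶ orbitGSet P V) := not_nonempty_iff.mp hcon
    have h0 : (Finsupp.single (𝟙 ((orbitObj P U).obj)) (1 : ZMod p) :
        ((orbitObj P U).obj ⟶ orbitGSet P U) →₀ ZMod p) = 0 :=
      hinj (Opposite.op (orbitObj P U))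
        (Subsingleton.elim (α := ((orbitObj P U).obj ⟶ orbitGSet P V) →₀ ZMod p) _ _)
    exact one_ne_zero (Finsupp.single_eq_zero.mp h0)
  obtain ⟨φ⟩ := hne
  obtain ⟨g, hg⟩ := QuotientGroup.mk_surjective (evPt (H := U) φ)
  have hUle : Subgroup.map (MulAut.conj g⁻¹).toMonoidHom U ≤ V := by
    rintro x ⟨u, hu, rfl⟩
    have h1 : φ.hom (QuotientGroup.mk u) = u • (QuotientGroup.mk g : P ⧸ V) := by
      erw [hom_apply_mk, ← hg]; rfl
    have h2 : (QuotientGroup.mk u : P ⧸ U) = QuotientGroup.mk 1 :=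
      QuotientGroup.eq.mpr (by simpa using U.inv_mem hu)
    have h3 : u • (QuotientGroup.mk g : P ⧸ V) = QuotientGroup.mk g := by
      rw [← h1, h2]
      show evPt φ = _
      rw [← hg]
    rw [MulAction.Quotient.smul_mk, smul_eq_mul] at h3
    have h4 := QuotientGroup.eq.mp h3
    have h5 : (MulAut.conj g⁻¹).toMonoidHom u = ((u * g)⁻¹ * g)⁻¹ := by
      simp [MulAut.conj_apply]
      group
    rw [h5]
    exact V.inv_mem h4
  -- Step 2: |P/U| ≤ |P/V|
  have hQle : Nat.card (P ⧸ U) ≤ Nat.card (P ⧸ V) := by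
    haveI := hfin (orbitObj P ⊥) U
    haveI := hfin (orbitObj P ⊥) V
    have hle := finsupp_card_le (f.app (Opposite.op (orbitObj P ⊥))).hom (hinj _)
    simp only [Opposite.unop_op] at hle
    have e1 : Nat.card ((orbitObj P ⊥).obj ⟶ orbitGSet P U) = Nat.card (P ⧸ U) :=
      Nat.card_congr (botEquiv (orbitGSet P U))
    have e2 : Nat.card ((orbitObj P ⊥).obj ⟶ orbitGSet P V) = Nat.card (P ⧸ V) :=
      Nat.card_congr (botEquiv (orbitGSet P V))
    omega
  have hVle : Nat.card V ≤ Nat.card U := by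
    have h1 := Subgroup.card_eq_card_quotient_mul_card_subgroup U
    have h2 := Subgroup.card_eq_card_quotient_mul_card_subgroup V
    have hpos : 0 < Nat.card (P ⧸ V) := Nat.card_pos
    nlinarith [hQle, hpos]
  -- Step 3: conjugacy
  have hcardU : Nat.card (Subgroup.map (MulAut.conj g⁻¹).toMonoidHom U) = Nat.card U :=
    (Nat.card_congr (U.equivMapOfInjective _ (MulAut.conj g⁻¹).injective).toEquiv).symm
  have hconj : Subgroup.map (MulAut.conj g⁻¹).toMonoidHom U = V :=
    Subgroup.eq_of_le_of_card_ge hUle (by rw [hcardU]; exact hVle)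
  -- Step 4: f is a pointwise isomorphism
  have hcardHom : ∀ Q : OrbitCat P,
      Nat.card (Q.obj ⟶ orbitGSet P U) = Nat.card (Q.obj ⟶ orbitGSet P V) :=
    fun Q => Nat.card_congr ((Iso.refl Q.obj).homCongr (orbitIsoOfConj U V g⁻¹ hconj))
  haveI : ∀ O : (OrbitCat P)ᵒᵖ, IsIso (f.app O) := by
    intro O
    haveI := hfin O.unop U
    haveI := hfin O.unop V
    have hb := finsupp_bijective (f.app O).hom (hinj O) (hcardHom O.unop)
    exact (ConcreteCategory.isIso_iff_bijective _).mpr hb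
  exact ⟨NatIso.isIso_of_isIso_app f, g⁻¹, hconj⟩
end

section
/- Let (a_q), (b_q), (c_q) be eventually-zero sequences of nonnegative integers satisfying, for a prime power |P| = n and all q, r ≥ 0, the Floyd–May inequality a_q + Σ_{i=0}^{r} (n−1)^i c_{q+i} ≤ Σ_{i=0}^{r} (n−1)^i b_{q+i} + (n−1)^{r+1} a_{q+r+1}, together with the Euler characteristic identity Σ_q (−1)^q b_q = Σ_q (−1)^q c_q + n · Σ_q (−1)^q a_q. Suppose b_q = 1 for exactly one value q = n_0 and b_q = 0 otherwise, and suppose additionally the refined inequality a_q + Σ_{i=0}^{r} c_{q+i} ≤ Σ_{i=0}^{r} b_{q+i} + a_{q+r+1} holds for suitable r. Then Σ_q c_q = 1, i.e. there is exactly one m with c_m = 1 and c_q = 0 for q ≠ m. -/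
/-- the arithmetic core of the Smith theory corollary: if `b` is the
indicator of a single degree, the Floyd–May inequalities (in refined form for
arbitrarily large `r`) together with the Euler characteristic identity force
`Σ c_q = 1`. -/
theorem smith_affine_arithmetic (n : ℕ) (hn : IsPrimePow n) (a b c : ℕ → ℕ)
    (ha : ∃ M : ℕ, ∀ i : ℕ, M ≤ i → a i = 0)
    (hb : ∃ M : ℕ, ∀ i : ℕ, M ≤ i → b i = 0)
    (hc : ∃ M : ℕ, ∀ i : ℕ, M ≤ i → c i = 0)
    (hFM : ∀ q r : ℕ,
      a q + ∑ i ∈ Finset.range (r + 1), (n - 1) ^ i * c (q + i) ≤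
        (∑ i ∈ Finset.range (r + 1), (n - 1) ^ i * b (q + i)) + (n - 1) ^ (r + 1) * a (q + r + 1))
    (hrefined : ∀ q r₀ : ℕ, ∃ r : ℕ, r₀ ≤ r ∧
      a q + ∑ i ∈ Finset.range (r + 1), c (q + i) ≤
        (∑ i ∈ Finset.range (r + 1), b (q + i)) + a (q + r + 1))
    (hEuler : (∑ᶠ q : ℕ, (-1 : ℤ) ^ q * (b q : ℤ)) =
      (∑ᶠ q : ℕ, (-1 : ℤ) ^ q * (c q : ℤ)) + n * ∑ᶠ q : ℕ, (-1 : ℤ) ^ q * (a q : ℤ))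
    (n₀ : ℕ) (hb1 : b n₀ = 1) (hb0 : ∀ q : ℕ, q ≠ n₀ → b q = 0) :
    ∃ m : ℕ, c m = 1 ∧ ∀ q : ℕ, q ≠ m → c q = 0 := by
  obtain ⟨Ma, hMa⟩ := ha
  obtain ⟨Mb, hMb⟩ := hb
  obtain ⟨Mc, hMc⟩ := hc
  -- n₀ < Mb
  have hn₀ : n₀ < Mb := by
    by_contra h
    have := hMb n₀ (le_of_not_gt h)
    omega
  set M := max (max Ma Mb) Mc with hM
  obtain ⟨r, hr, hineq⟩ := hrefined 0 M
  have har : a (0 + r + 1) = 0 := hMa _ (by omega)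
  have hbsum : (∑ i ∈ Finset.range (r + 1), b (0 + i)) = 1 := by
    simp only [Nat.zero_add]
    rw [Finset.sum_eq_single n₀]
    · exact hb1
    · intro q _ hq; exact hb0 q hq
    · intro h; exfalso; apply h; exact Finset.mem_range.mpr (by omega)
  rw [har, hbsum] at hineq
  simp only [Nat.zero_add, Nat.add_zero] at hineq
  -- Σ_{i<r+1} c i ≤ 1
  have hcle : (∑ i ∈ Finset.range (r + 1), c i) ≤ 1 := by omega
  interval_cases h : (∑ i ∈ Finset.range (r + 1), c i)
  · -- sum = 0: all c = 0, contradiction via Euler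
    exfalso
    have hc0 : ∀ q, c q = 0 := by
      intro q
      rcases lt_or_ge q (r + 1) with hq | hq
      · exact Finset.sum_eq_zero_iff.mp h q (Finset.mem_range.mpr hq)
      · rcases le_or_gt Mc q with h' | h'
        · exact hMc q h'
        · exact Finset.sum_eq_zero_iff.mp h q (Finset.mem_range.mpr (by omega))
    have hcf : (∑ᶠ q : ℕ, (-1 : ℤ) ^ q * (c q : ℤ)) = 0 := by
      have : ∀ q : ℕ, (-1 : ℤ) ^ q * (c q : ℤ) = 0 := by
        intro q; rw [hc0 q]; ring
      simp only [this, finsum_zero]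
    have hbf : (∑ᶠ q : ℕ, (-1 : ℤ) ^ q * (b q : ℤ)) = (-1 : ℤ) ^ n₀ := by
      rw [finsum_eq_single _ n₀]
      · rw [hb1]; ring
      · intro q hq; rw [hb0 q hq]; ring
    rw [hcf, hbf, zero_add] at hEuler
    have hdvd : (n : ℤ) ∣ (-1 : ℤ) ^ n₀ := ⟨_, hEuler⟩
    have : (n : ℤ) ∣ 1 := hdvd.trans (isUnit_one.neg.pow n₀).dvd
    have h1 : n ∣ 1 := by exact_mod_cast this
    have h2 := hn.two_le
    have := Nat.le_of_dvd one_pos h1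
    omega
  · -- sum = 1: extract m
    have hex : ∃ m ∈ Finset.range (r + 1), c m ≠ 0 := by
      by_contra hno
      push_neg at hno
      have : (∑ i ∈ Finset.range (r + 1), c i) = 0 :=
        Finset.sum_eq_zero fun i hi => hno i hi
      omega
    obtain ⟨m, hm, hmne⟩ := hex
    have hcm : c m = 1 := by
      have h1 : c m ≤ 1 := h ▸ Finset.single_le_sum (f := c) (fun i _ => Nat.zero_le _) hm
      omega
    refine ⟨m, hcm, fun q hq => ?_⟩
    rcases le_or_gt Mc q with h' | h'
    · exact hMc q h'
    have hq' : q < r + 1 ∨ q ≥ r + 1 := lt_or_ge _ _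
    rcases hq' with hq' | hq'
    · have := Finset.add_sum_erase _ c hm
      rw [h, hcm] at this
      have hz : (∑ i ∈ (Finset.range (r+1)).erase m, c i) = 0 := by omega
      exact Finset.sum_eq_zero_iff.mp hz q
        (Finset.mem_erase.mpr ⟨hq, Finset.mem_range.mpr hq'⟩)
    · omega
end

section
/- Let G be a finite group, R a commutative ring, and A a set of subgroups of G closed under conjugation and under passing to larger subgroups (supergroups). Define L_A on the representable coefficient systems by: L_A R[G/H^?] equals R[G/H^?] (the whole system) if H ∈ A, and is the subsystem R[(S_A(G/H))^?] in general, where S_A(G/H) = ∪_{J ∈ A} (G/H)^J. Then for every H ≤ G, the smallest subsystem of R[G/H^?] agreeing with R[G/H^?] on all members of A is exactly R[(S_A(G/H))^?]. -/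
open CategoryTheory

universe u

variable (R : Type) [CommRing R] (G : Type) [Group G]

open CategoryTheory.Limits in
instance (R : Type) [CommRing R] (G : Type) [Group G] :
    HasFiniteBiproducts (CoeffSystem R G) :=
  HasFiniteBiproducts.of_hasFiniteProducts

section Subsystems

variable {R : Type} [CommRing R] {G : Type} [Group G]

/-- A subsystem of a coefficient system: a submodule at each orbit, closed under the
structure maps. -/
structure Subsystem (L : CoeffSystem R G) where
  toFun : ∀ O : (OrbitCat G)ᵒᵖ, Submodule R (L.obj O)
  map_mem : ∀ {O O' : (OrbitCat G)ᵒᵖ} (f : O ⟶ O') (x : L.obj O),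
    x ∈ toFun O → L.map f x ∈ toFun O'

/-- The subsystem of `R[X^?]` spanned, at each orbit `O`, by the maps `O → X` taking
values in a subset `Y ⊆ X`; for `Y = S_A X` this is `R[(S_A X)^?]`. -/
def subFree (X : GSet G) (Y : Set X.V) : Subsystem (freeSystem R G X) where
  toFun O := Finsupp.supported R R {φ : O.unop.obj ⟶ X | ∀ o, φ.hom o ∈ Y}
  map_mem := by
    classical
    intro O O' f x hx
    refine (Finsupp.mem_supported' R _).2 ?_
    intro ψ hψ
    replace hx := (Finsupp.mem_supported R _).1 hx
    show Finsupp.mapDomain (fun φ => toGHom G f.unop ≫ φ) x ψ = 0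
    by_contra h0
    have hmem := Finsupp.mapDomain_support (f := fun φ => toGHom G f.unop ≫ φ)
      (Finsupp.mem_support_iff.2 h0)
    rcases Finset.mem_image.1 hmem with ⟨φ, hφ, rfl⟩
    apply hψ
    intro o
    exact hx hφ ((toGHom G f.unop).hom o)

end Subsystems

section MyHelpers

variable {G : Type} [Group G]

/-- The underlying function of a `G`-map between orbits, with clean types. -/
def myApp {K H : Subgroup G} (φ : orbitGSet G K ⟶ orbitGSet G H) : G ⧸ K → G ⧸ H := φ.hom

lemma myApp_smul {K H : Subgroup G} (φ : orbitGSet G K ⟶ orbitGSet G H) (g : G)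
    (x : G ⧸ K) : myApp φ (g • x) = g • myApp φ x := types_congr_hom (φ.comm g) x

lemma mySmul_mk (K : Subgroup G) (g a : G) :
    g • ((a : G ⧸ K)) = ((g * a : G) : G ⧸ K) := rfl

/-- The `G`-map `G/K → G/H` determined by a point `y` fixed by `K`. -/
def myMkHom (K H : Subgroup G) (y : G ⧸ H) (hy : ∀ k ∈ K, k • y = y) :
    orbitGSet G K ⟶ orbitGSet G H where
  hom := TypeCat.ofHom fun (x : G ⧸ K) => Quotient.liftOn' x (fun (g : G) => g • y) (fun (a b : G) h => by
    rw [QuotientGroup.leftRel_apply] at h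
    calc a • y = a • ((a⁻¹ * b) • y) := by rw [hy _ h]
    _ = b • y := by rw [← mul_smul, mul_inv_cancel_left])
  comm := fun g => ConcreteCategory.hom_ext _ _ fun x => by
    refine Quotient.inductionOn' x (fun a => ?_)
    exact mul_smul (show G from g) a y

@[simp] lemma myMkHom_apply (K H : Subgroup G) (y : G ⧸ H) (hy : ∀ k ∈ K, k • y = y)
    (g : G) : myApp (myMkHom K H y hy) ((g : G ⧸ K)) = g • y := rfl

lemma myFixed_one (K H : Subgroup G) (φ : orbitGSet G K ⟶ orbitGSet G H) :
    ∀ k ∈ K, k • myApp φ ((1 : G) : G ⧸ K) = myApp φ ((1 : G) : G ⧸ K) := by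
  intro k hk
  have h1 : ((k : G) : G ⧸ K) = ((1 : G) : G ⧸ K) := by
    rw [QuotientGroup.eq]; simpa using hk
  rw [← myApp_smul, mySmul_mk, mul_one, h1]

lemma myEquivariant_val (K H : Subgroup G) (φ : orbitGSet G K ⟶ orbitGSet G H)
    (g : G) : myApp φ ((g : G) : G ⧸ K) = g • myApp φ ((1 : G) : G ⧸ K) := by
  rw [← myApp_smul, mySmul_mk, mul_one]

lemma myMk_one_fixed (K' K : Subgroup G) (hKK : K' ≤ K) :
    ∀ k ∈ K', k • ((1 : G) : G ⧸ K) = ((1 : G) : G ⧸ K) := fun k hk => by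
  rw [mySmul_mk, mul_one, QuotientGroup.eq]
  simpa using hKK hk

/-- Factorization of a `G`-map `G/K' → G/H` through `G/K` when `K' ≤ K` fixes
the image of the identity coset. -/
lemma myFactor (K' K H : Subgroup G) (hKK : K' ≤ K)
    (φ : orbitGSet G K' ⟶ orbitGSet G H)
    (hy : ∀ k ∈ K, k • myApp φ ((1 : G) : G ⧸ K') = myApp φ ((1 : G) : G ⧸ K')) :
    φ = myMkHom K' K ((1 : G) : G ⧸ K) (myMk_one_fixed K' K hKK) ≫
      myMkHom K H (myApp φ ((1 : G) : G ⧸ K')) hy := by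
  apply Action.Hom.ext
  apply ConcreteCategory.hom_ext
  intro x
  refine Quotient.inductionOn' x (fun g => ?_)
  show myApp φ ((g : G ⧸ K')) =
    myApp (myMkHom K H (myApp φ ((1 : G) : G ⧸ K')) hy)
      (myApp (myMkHom K' K ((1 : G) : G ⧸ K) (myMk_one_fixed K' K hKK)) (g : G ⧸ K'))
  rw [myMkHom_apply, mySmul_mk, mul_one, myMkHom_apply, myEquivariant_val]

end MyHelpers

/-- for `A` closed under conjugation and supergroups, the smallest
subsystem of `R[G/H^?]` agreeing with it on all members of `A` is
`R[(S_A(G/H))^?]`, the subsystem spanned by maps with values in `S_A(G/H)`. -/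
theorem smallest_subsystem_eq_sA (R : Type) [CommRing R] (G : Type) [Group G] [Finite G]
    (A : Set (Subgroup G))
    (hconj : ∀ J ∈ A, ∀ g : G, Subgroup.map (MulAut.conj g).toMonoidHom J ∈ A)
    (hsup : ∀ J ∈ A, ∀ K : Subgroup G, J ≤ K → K ∈ A) (H : Subgroup G)
    (T : Subsystem (orbitSystem R G H))
    (hT : T = subFree (orbitGSet G H)
      (⋃ J ∈ A, {y : G ⧸ H | ∀ j ∈ J, j • y = y})) :
    (∀ K ∈ A, T.toFun (Opposite.op (orbitObj G K)) = ⊤) ∧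
    (∀ S : Subsystem (orbitSystem R G H),
      (∀ K ∈ A, S.toFun (Opposite.op (orbitObj G K)) = ⊤) →
      ∀ O : (OrbitCat G)ᵒᵖ, T.toFun O ≤ S.toFun O) := by
  classical
  subst hT
  set Y : Set (G ⧸ H) := ⋃ J ∈ A, {y : G ⧸ H | ∀ j ∈ J, j • y = y} with hY
  constructor
  · intro K hK
    have hall : {φ : (orbitObj G K).obj ⟶ orbitGSet G H | ∀ o, φ.hom o ∈ Y} = Set.univ := by
      refine Set.eq_univ_of_forall fun φ => ?_
      intro o
      refine Quotient.inductionOn' o (fun g => ?_)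
      have h1 := myEquivariant_val K H φ g
      show myApp φ ((g : G ⧸ K)) ∈ Y
      rw [h1]
      refine Set.mem_iUnion₂.2 ⟨Subgroup.map (MulAut.conj g).toMonoidHom K, hconj K hK g, ?_⟩
      rintro j ⟨k, hk, rfl⟩
      show (g * k * g⁻¹) • g • myApp φ ((1 : G) : G ⧸ K) = g • myApp φ ((1 : G) : G ⧸ K)
      rw [smul_smul, show g * k * g⁻¹ * g = g * k by group, ← smul_smul,
        myFixed_one K H φ k hk]
    show Finsupp.supported R R {φ : (orbitObj G K).obj ⟶ orbitGSet G H | ∀ o, φ.hom o ∈ Y} = ⊤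
    rw [hall, Finsupp.supported_univ]
  · intro S hS O
    show Finsupp.supported R R {φ : O.unop.obj ⟶ orbitGSet G H | ∀ o, φ.hom o ∈ Y} ≤ S.toFun O
    rw [Finsupp.supported_eq_span_single]
    refine Submodule.span_le.2 ?_
    rintro _ ⟨φ, hφ, rfl⟩
    obtain ⟨K', ⟨e⟩⟩ := O.unop.property
    set φ' : orbitGSet G K' ⟶ orbitGSet G H := e.inv ≫ φ with hφ'
    set y1 : G ⧸ H := myApp φ' ((1 : G) : G ⧸ K') with hy1
    have hyY : y1 ∈ Y := hφ (e.inv.hom ((1 : G) : G ⧸ K'))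
    rcases Set.mem_iUnion₂.1 hyY with ⟨J, hJ, hyJ⟩
    set K : Subgroup G := J ⊔ K' with hKdef
    have hKA : K ∈ A := hsup J hJ K le_sup_left
    have hK'K : K' ≤ K := le_sup_right
    have hyK : ∀ k ∈ K, k • y1 = y1 := by
      intro k hk
      have hle : K ≤ MulAction.stabilizer G y1 := sup_le
        (fun j hj => MulAction.mem_stabilizer_iff.2 (hyJ j hj))
        (fun k hk => MulAction.mem_stabilizer_iff.2 (myFixed_one K' H φ' k hk))
      exact MulAction.mem_stabilizer_iff.1 (hle hk)
    have hfact := myFactor K' K H hK'K φ' hyK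
    set ψ : orbitGSet G K ⟶ orbitGSet G H := myMkHom K H y1 hyK with hψ
    set p : orbitGSet G K' ⟶ orbitGSet G K :=
      myMkHom K' K ((1 : G) : G ⧸ K) (myMk_one_fixed K' K hK'K) with hp
    let u : O.unop ⟶ orbitObj G K := ObjectProperty.homMk (P := IsOrbit G) (show O.unop.obj ⟶ orbitGSet G K from e.hom ≫ p)
    have h1 : (Finsupp.single ψ (1 : R) : ((orbitObj G K).obj ⟶ orbitGSet G H) →₀ R)
        ∈ S.toFun (Opposite.op (orbitObj G K)) := by
      rw [hS K hKA]; trivial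
    have h2 := S.map_mem u.op _ h1
    have heq : (orbitSystem R G H).map u.op (Finsupp.single ψ (1 : R))
        = Finsupp.single φ (1 : R) := by
      show Finsupp.mapDomain (fun χ => toGHom G u ≫ χ) (Finsupp.single ψ 1) = _
      erw [Finsupp.mapDomain_single]
      congr 1
      show (e.hom ≫ p) ≫ ψ = φ
      rw [Category.assoc, ← hfact, hφ', e.hom_inv_id_assoc]
    rw [heq] at h2
    exact h2
end
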